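/- Let T be a rooted tree and S a finite set of nodes closed under pairwise LCA, with the virtual tree G on S (edges between u,v ∈ S with no other node of S strictly between them on the tree path, weighted by w(u,v) = dist_T(u,v)). Then for any two nodes u, v ∈ S, the weighted distance between u and v in G equals dist_T(u, v). -/
import Mathlib


variable {V : Type} [Fintype V] [DecidableEq V]

/-- `u` is an ancestor of `v` in the tree `G` rooted at `root`:
`u` lies on the unique path from `root` to `v`. -/
def isAncestor (G : SimpleGraph V) (root u v : V) : Prop :=
  G.dist root u + G.dist u v = G.dist root v

/-- `w` is the lowest common ancestor of `u` and `v`: a common ancestor such that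
every common ancestor of `u` and `v` is an ancestor of `w`. -/
def isLCA (G : SimpleGraph V) (root u v w : V) : Prop :=
  isAncestor G root w u ∧ isAncestor G root w v ∧
    ∀ x, isAncestor G root x u → isAncestor G root x v → isAncestor G root x w

/-- The virtual (compressed) tree of a set `S` of nodes of the tree `G`:
`u` and `v` are adjacent iff both are in `S` and no other node of `S` lies on
the tree path between them. -/
def virtGraph (G : SimpleGraph V) (S : Finset V) : SimpleGraph V :=
  SimpleGraph.fromRel fun u v =>
    u ∈ S ∧ v ∈ S ∧ ¬ ∃ x ∈ S, x ≠ u ∧ x ≠ v ∧ G.dist u x + G.dist x v = G.dist u v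

/-- Total weight of a walk, where edge `{u,v}` has weight `wt u v`. -/
def walkWeight (wt : V → V → ℕ) {G' : SimpleGraph V} : {u v : V} → G'.Walk u v → ℕ
  | _, _, SimpleGraph.Walk.nil => 0
  | _, _, @SimpleGraph.Walk.cons _ _ a x _ _ p => wt a x + walkWeight wt p


lemma walkWeight_append (wt : V → V → ℕ) {G' : SimpleGraph V} {a b c : V}
    (p : G'.Walk a b) (q : G'.Walk b c) :
    walkWeight wt (p.append q) = walkWeight wt p + walkWeight wt q := by
  induction p with
  | nil => simp [walkWeight]
  | cons h p ih => simp [walkWeight, ih]; omega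

lemma exists_virt_walk (G : SimpleGraph V) (hc : G.Connected) (S : Finset V) :
    ∀ n u v, G.dist u v = n → u ∈ S → v ∈ S →
      ∃ p : (virtGraph G S).Walk u v, walkWeight G.dist p = G.dist u v := by
  intro n
  induction n using Nat.strong_induction_on with
  | _ n ih =>
    intro u v hn hu hv
    by_cases huv : u = v
    · subst huv
      exact ⟨SimpleGraph.Walk.nil, by simp [walkWeight, (hc.dist_eq_zero_iff).2 rfl]⟩
    · by_cases hx : ∃ x ∈ S, x ≠ u ∧ x ≠ v ∧ G.dist u x + G.dist x v = G.dist u v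
      · obtain ⟨x, hxS, hxu, hxv, hsum⟩ := hx
        have h1 : 0 < G.dist u x := by
          rcases Nat.eq_zero_or_pos (G.dist u x) with h | h
          · exact absurd ((hc.dist_eq_zero_iff).1 h).symm hxu
          · exact h
        have h2 : 0 < G.dist x v := by
          rcases Nat.eq_zero_or_pos (G.dist x v) with h | h
          · exact absurd ((hc.dist_eq_zero_iff).1 h) hxv
          · exact h
        obtain ⟨p1, hp1⟩ := ih (G.dist u x) (by omega) u x rfl hu hxS
        obtain ⟨p2, hp2⟩ := ih (G.dist x v) (by omega) x v rfl hxS hv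
        exact ⟨p1.append p2, by rw [walkWeight_append, hp1, hp2, hsum]⟩
      · have hadj : (virtGraph G S).Adj u v := by
          simp only [virtGraph, SimpleGraph.fromRel_adj]
          exact ⟨huv, Or.inl ⟨hu, hv, hx⟩⟩
        exact ⟨SimpleGraph.Walk.cons hadj SimpleGraph.Walk.nil, by
          simp [walkWeight, (hc.dist_eq_zero_iff).2 (rfl : v = v)]⟩

/-- in the virtual tree of an LCA-closed set (edges weighted by
tree distance), the weighted distance between two nodes of `S` equals their
tree distance: some walk achieves it and no walk is lighter. -/
theorem stmt12 (G : SimpleGraph V) (hG : G.IsTree) (root : V)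
    (lca : V → V → V) (hlca : ∀ u v, isLCA G root u v (lca u v))
    (S : Finset V) (hclosed : ∀ u ∈ S, ∀ v ∈ S, lca u v ∈ S)
    (u v : V) (hu : u ∈ S) (hv : v ∈ S) :
    (∃ p : (virtGraph G S).Walk u v, walkWeight G.dist p = G.dist u v) ∧
      ∀ p : (virtGraph G S).Walk u v, G.dist u v ≤ walkWeight G.dist p := by
  have hc := hG.1
  constructor
  · exact exists_virt_walk G hc S _ u v rfl hu hv
  · clear hu hv
    intro p
    induction p with
    | nil => simp [walkWeight]
    | @cons a b c h p ih =>
      calc G.dist a c ≤ G.dist a b + G.dist b c := hc.dist_triangle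
        _ ≤ G.dist a b + walkWeight G.dist p := Nat.add_le_add_left ih _
        _ = walkWeight G.dist (SimpleGraph.Walk.cons h p) := rfl
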